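/- Let u and v be nonzero vectors in a real inner product space. Then ‖ u/‖u‖ − v/‖v‖ ‖ ≤ 2 · ‖u − v‖ / √(‖u‖² + ‖v‖²). -/

import Mathlib

/-- For nonzero vectors `u, v` in a real inner product space,
`‖u/‖u‖ − v/‖v‖‖ ≤ 2‖u − v‖/√(‖u‖² + ‖v‖²)`. -/
theorem normalized_vectors_dist_bound {F : Type*} [NormedAddCommGroup F]
    [InnerProductSpace ℝ F] (u v : F) (hu : u ≠ 0) (hv : v ≠ 0) :
    ‖‖u‖⁻¹ • u - ‖v‖⁻¹ • v‖ ≤ 2 * ‖u - v‖ / Real.sqrt (‖u‖ ^ 2 + ‖v‖ ^ 2) := by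
  have ha : (0:ℝ) < ‖u‖ := norm_pos_iff.mpr hu
  have hb : (0:ℝ) < ‖v‖ := norm_pos_iff.mpr hv
  have hs : (0:ℝ) < ‖u‖ ^ 2 + ‖v‖ ^ 2 := by positivity
  have hsq : (0:ℝ) < Real.sqrt (‖u‖ ^ 2 + ‖v‖ ^ 2) := Real.sqrt_pos.mpr hs
  rw [le_div_iff₀ hsq]
  have hcs : |(inner ℝ u v : ℝ)| ≤ ‖u‖ * ‖v‖ := abs_real_inner_le_norm u v
  rw [abs_le] at hcs
  have h1 : ‖u - v‖ ^ 2 = ‖u‖ ^ 2 - 2 * (inner ℝ u v : ℝ) + ‖v‖ ^ 2 := by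
    rw [@norm_sub_sq_real]
  have h2 : ‖‖u‖⁻¹ • u - ‖v‖⁻¹ • v‖ ^ 2 = 2 - 2 * (‖u‖⁻¹ * ‖v‖⁻¹ * (inner ℝ u v : ℝ)) := by
    rw [@norm_sub_sq_real, norm_smul, norm_smul, real_inner_smul_left,
      real_inner_smul_right]
    simp only [Real.norm_eq_abs, abs_inv, abs_norm, real_inner_self_eq_norm_sq]
    field_simp
    ring
  have hnn : (0:ℝ) ≤ ‖‖u‖⁻¹ • u - ‖v‖⁻¹ • v‖ * Real.sqrt (‖u‖ ^ 2 + ‖v‖ ^ 2) := by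
    positivity
  have hnn2 : (0:ℝ) ≤ 2 * ‖u - v‖ := by positivity
  have key : (‖‖u‖⁻¹ • u - ‖v‖⁻¹ • v‖ * Real.sqrt (‖u‖ ^ 2 + ‖v‖ ^ 2)) ^ 2
      ≤ (2 * ‖u - v‖) ^ 2 := by
    rw [mul_pow, Real.sq_sqrt hs.le, h2, mul_pow, h1]
    have hab : (0:ℝ) < ‖u‖ * ‖v‖ := by positivity
    have hc : ‖u‖⁻¹ * ‖v‖⁻¹ * (‖u‖ * ‖v‖) = 1 := by field_simp
    nlinarith [sq_nonneg (‖u‖ - ‖v‖), sq_nonneg (‖u‖ + ‖v‖), hcs.1, hcs.2,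
      mul_pos ha hb, mul_le_mul_of_nonneg_left hcs.2 (le_of_lt (by positivity : (0:ℝ) < ‖u‖⁻¹ * ‖v‖⁻¹)),
      mul_le_mul_of_nonneg_left hcs.1 (le_of_lt (by positivity : (0:ℝ) < ‖u‖⁻¹ * ‖v‖⁻¹))]
  exact (pow_le_pow_iff_left₀ hnn hnn2 two_ne_zero).mp key
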